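/- arXiv:1309.2835 — 3 statements merged into one kernel-verified Lean document; each statement's English description precedes it below -/
import Mathlib

section
/- Let K be a field, C a coassociative counital K-coalgebra, and {M_i}_{i∈I} a family of left C-comodules. Let P = ∏_{i∈I} M_i be the product of the underlying K-vector spaces with projections π_i : P → M_i. Then there exists a unique maximal K-subspace D ⊆ P which carries a left C-comodule structure such that each restriction π_i|_D : D → M_i is a comodule morphism, and (D, {π_i|_D}_{i∈I}) is the product of the family {M_i}_{i∈I} in the category of left C-comodules. -/
open TensorProduct

universe u v w w'

/-- A left comodule structure (coaction) over a coalgebra `C` on a module `V`: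
a linear map `ρ : V → C ⊗ V` satisfying the coassociativity and counit axioms. -/
structure Coaction (K : Type u) (C : Type v) (V : Type w) [CommSemiring K]
    [AddCommMonoid C] [Module K C] [Coalgebra K C] [AddCommMonoid V] [Module K V] where
  ρ : V →ₗ[K] C ⊗[K] V
  coassoc : LinearMap.rTensor V (Coalgebra.comul (R := K) (A := C)) ∘ₗ ρ =
    (TensorProduct.assoc K C C V).symm.toLinearMap ∘ₗ LinearMap.lTensor C ρ ∘ₗ ρ
  counit : (TensorProduct.lid K V).toLinearMap ∘ₗ
      LinearMap.rTensor V (Coalgebra.counit (R := K) (A := C)) ∘ₗ ρ = LinearMap.id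

/-- A linear map `f : V → W` is a morphism of left `C`-comodules (w.r.t. the given
coactions) if it commutes with the coactions. -/
def IsComodHom {K : Type u} {C : Type v} {V : Type w} {W : Type w'} [CommSemiring K]
    [AddCommMonoid C] [Module K C] [Coalgebra K C] [AddCommMonoid V] [Module K V]
    [AddCommMonoid W] [Module K W]
    (ρV : Coaction K C V) (ρW : Coaction K C W) (f : V →ₗ[K] W) : Prop :=
  ρW.ρ ∘ₗ f = LinearMap.lTensor C f ∘ₗ ρV.ρ

namespace ComodProdAux

open LinearMap

variable {K : Type u} [Field K]

section kappa

variable {A : Type*} [AddCommGroup A] [Module K A] {ι : Type*} [DecidableEq ι]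
  (b : Module.Basis ι K A)

/-- `A ⊗ V ≃ ι →₀ V` given a basis of `A` indexed by `ι`. -/
noncomputable def EE (V : Type*) [AddCommGroup V] [Module K V] :
    A ⊗[K] V ≃ₗ[K] (ι →₀ V) :=
  (TensorProduct.congr b.repr (LinearEquiv.refl K V)).trans
    (TensorProduct.finsuppScalarLeft K V ι)

/-- The `k`-th coordinate map `A ⊗ V → V` w.r.t. a basis of `A`. -/
noncomputable def kappa {V : Type*} [AddCommGroup V] [Module K V] (k : ι) :
    A ⊗[K] V →ₗ[K] V :=
  Finsupp.lapply k ∘ₗ (EE b V).toLinearMap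

variable {V : Type*} [AddCommGroup V] [Module K V]

lemma kappa_tmul (k : ι) (a : A) (vv : V) :
    kappa b k (a ⊗ₜ[K] vv) = b.repr a k • vv := by
  simp [kappa, EE, TensorProduct.congr_tmul,
    TensorProduct.finsuppScalarLeft_apply_tmul_apply]

lemma kappa_eq_of {s t : A ⊗[K] V} (h : ∀ k, kappa b k s = kappa b k t) :
    s = t := by
  apply (EE b V).injective
  ext k
  exact h k

lemma kappa_nat {W : Type*} [AddCommGroup W] [Module K W]
    (f : V →ₗ[K] W) (k : ι) (t : A ⊗[K] V) :
    kappa b k (lTensor A f t) = f (kappa b k t) := by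
  have : kappa b k ∘ₗ lTensor A f = f ∘ₗ kappa b k := by
    apply TensorProduct.ext'
    intro a vv
    simp [kappa_tmul, map_smul]
  exact LinearMap.congr_fun this t

lemma kappa_EE_symm (d : ι →₀ V) (k : ι) :
    kappa b k ((EE b V).symm d) = d k := by
  simp [kappa]

lemma exists_lift (D : Submodule K V) (t : A ⊗[K] V)
    (h : ∀ k, kappa b k t ∈ D) :
    ∃ s : A ⊗[K] D, lTensor A D.subtype s = t := by
  set d : ι →₀ V := EE b V t with hd
  have hdk : ∀ k, d k ∈ D := fun k => h k
  refine ⟨(EE b D).symm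
    (Finsupp.onFinset d.support (fun k => ⟨d k, hdk k⟩) ?_), ?_⟩
  · intro k hk
    exact Finsupp.mem_support_iff.mpr fun h0 => hk (Subtype.ext h0)
  · apply kappa_eq_of b
    intro k
    rw [kappa_nat, kappa_EE_symm]
    rfl

end kappa


section helpers

/-- Tensoring with the inclusion of a submodule is injective. -/
lemma ltsub_inj (A : Type*) [AddCommGroup A] [Module K A]
    {V : Type*} [AddCommGroup V] [Module K V] (E : Submodule K V) :
    Function.Injective (lTensor A E.subtype) :=
  Module.Flat.lTensor_preserves_injective_linearMap E.subtype E.injective_subtype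

/-- Naturality of the (inverse) associator in the last component. -/
lemma assoc_symm_nat {A B V W : Type*} [AddCommGroup A] [Module K A]
    [AddCommGroup B] [Module K B] [AddCommGroup V] [Module K V]
    [AddCommGroup W] [Module K W] (f : V →ₗ[K] W) (u : A ⊗[K] (B ⊗[K] V)) :
    lTensor (A ⊗[K] B) f ((TensorProduct.assoc K A B V).symm u)
      = (TensorProduct.assoc K A B W).symm (lTensor A (lTensor B f) u) := by
  induction u using TensorProduct.induction_on with
  | zero => simp
  | tmul a s =>
    induction s using TensorProduct.induction_on with
    | zero => simp
    | tmul b vv => simp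
    | add x y hx hy => simp only [tmul_add, map_add, hx, hy]
  | add x y hx hy => simp only [map_add, hx, hy]

/-- `lTensor` and `rTensor` commute. -/
lemma swap_lr {A B V W : Type*} [AddCommGroup A] [Module K A]
    [AddCommGroup B] [Module K B] [AddCommGroup V] [Module K V]
    [AddCommGroup W] [Module K W] (g : A →ₗ[K] B) (f : V →ₗ[K] W)
    (u : A ⊗[K] V) :
    lTensor B f (rTensor V g u) = rTensor W g (lTensor A f u) := by
  rw [← LinearMap.comp_apply, ← LinearMap.comp_apply, lTensor_comp_rTensor,
    rTensor_comp_lTensor]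

/-- Naturality of `lid`. -/
lemma lid_nat {V W : Type*} [AddCommGroup V] [Module K V]
    [AddCommGroup W] [Module K W] (f : V →ₗ[K] W) (u : K ⊗[K] V) :
    f (TensorProduct.lid K V u) = TensorProduct.lid K W (lTensor K f u) := by
  induction u using TensorProduct.induction_on with
  | zero => simp
  | tmul r vv => simp
  | add x y hx hy => simp only [map_add, hx, hy]

lemma inj_symm_val {V W : Type*} [AddCommGroup V] [Module K V]
    [AddCommGroup W] [Module K W] (f : V →ₗ[K] W) (hf : Function.Injective f)
    (z : LinearMap.range f) :
    f ((LinearEquiv.ofInjective f hf).symm z) = z := by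
  have h1 := congrArg Subtype.val
    ((LinearEquiv.ofInjective f hf).apply_symm_apply z)
  rwa [LinearEquiv.ofInjective_apply] at h1


end helpers

section prodinj

variable {I : Type w} {M : I → Type w'} [∀ i, AddCommGroup (M i)]
  [∀ i, Module K (M i)]

lemma pi_lTensor_inj (A : Type*) [AddCommGroup A] [Module K A]
    {s t : A ⊗[K] (∀ i, M i)}
    (h : ∀ i, lTensor A (LinearMap.proj (R := K) (φ := M) i) s
      = lTensor A (LinearMap.proj (R := K) (φ := M) i) t) : s = t := by
  classical
  set b := Module.Basis.ofVectorSpace K A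
  apply kappa_eq_of b
  intro k
  funext i
  have : LinearMap.proj (R := K) (φ := M) i (kappa b k s)
      = LinearMap.proj (R := K) (φ := M) i (kappa b k t) := by
    rw [← kappa_nat, ← kappa_nat, h i]
  exact this

end prodinj

section coalg

variable {C : Type v} [AddCommGroup C] [Module K C] [Coalgebra K C]
variable {ι : Type*} [DecidableEq ι] (b : Module.Basis ι K C)
variable {V : Type*} [AddCommGroup V] [Module K V]
variable {W : Type*} [AddCommGroup W] [Module K W]

lemma extract_first (k : ι) (c : C) (s : C ⊗[K] W) :
    rTensor W (kappa b k) ((TensorProduct.assoc K C C W).symm (c ⊗ₜ[K] s))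
      = b.repr c k • s := by
  induction s using TensorProduct.induction_on with
  | zero => simp
  | tmul c' x => simp [kappa_tmul, smul_tmul']
  | add x y hx hy => simp only [tmul_add, map_add, hx, hy, smul_add]

lemma extract_nat (k : ι) (g : V →ₗ[K] C ⊗[K] W) (t : C ⊗[K] V) :
    rTensor W (kappa b k) ((TensorProduct.assoc K C C W).symm (lTensor C g t))
      = g (kappa b k t) := by
  induction t using TensorProduct.induction_on with
  | zero => simp
  | tmul c vv => rw [lTensor_tmul, extract_first, kappa_tmul, map_smul]
  | add x y hx hy => simp only [map_add, hx, hy]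

lemma coact_coord (σV : Coaction K C V) (k : ι) (v : V) :
    rTensor V (kappa b k ∘ₗ Coalgebra.comul (R := K) (A := C)) (σV.ρ v)
      = σV.ρ (kappa b k (σV.ρ v)) := by
  have hc := LinearMap.congr_fun σV.coassoc v
  simp only [LinearMap.comp_apply, LinearEquiv.coe_coe] at hc
  rw [rTensor_comp, LinearMap.comp_apply, hc, extract_nat]

end coalg


section main

variable (K : Type u) [Field K] (C : Type v) [AddCommGroup C] [Module K C]
    [Coalgebra K C] {I : Type w} (M : I → Type w')
    [∀ i, AddCommGroup (M i)] [∀ i, Module K (M i)] (σ : ∀ i, Coaction K C (M i))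

/-- The canonical map `C ⊗ ∏ Mᵢ → ∏ (C ⊗ Mᵢ)`. -/
noncomputable def theta : C ⊗[K] (∀ i, M i) →ₗ[K] ∀ i, C ⊗[K] M i :=
  LinearMap.pi fun i => lTensor C (LinearMap.proj i)

/-- The componentwise coaction `∏ Mᵢ → ∏ (C ⊗ Mᵢ)`. -/
noncomputable def rhoHat : (∀ i, M i) →ₗ[K] ∀ i, C ⊗[K] M i :=
  LinearMap.pi fun i => (σ i).ρ ∘ₗ LinearMap.proj i

/-- The maximal subspace of the product carrying a comodule structure. -/
noncomputable def DD : Submodule K (∀ i, M i) :=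
  (LinearMap.range (theta K C M)).comap (rhoHat K C M σ)

lemma theta_inj : Function.Injective (theta K C M) := fun s t h =>
  pi_lTensor_inj C fun i => congrFun h i

lemma kappa_mem_DD {ι : Type*} [DecidableEq ι] (b : Module.Basis ι K C)
    {x : ∀ i, M i} (hx : x ∈ DD K C M σ) {t : C ⊗[K] (∀ i, M i)}
    (ht : theta K C M t = rhoHat K C M σ x) (k : ι) :
    kappa b k t ∈ DD K C M σ := by
  refine ⟨rTensor _ (kappa b k ∘ₗ Coalgebra.comul (R := K) (A := C)) t, ?_⟩
  funext i
  have hti : lTensor C (LinearMap.proj (R := K) (φ := M) i) t = (σ i).ρ (x i) :=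
    congrFun ht i
  show lTensor C (LinearMap.proj i)
      (rTensor _ (kappa b k ∘ₗ Coalgebra.comul (R := K) (A := C)) t)
    = (σ i).ρ (LinearMap.proj i (kappa b k t))
  rw [swap_lr, hti, coact_coord b (σ i) k (x i), ← hti, kappa_nat]

/-- The lifted coaction `D → C ⊗ P`. -/
noncomputable def rho' : (DD K C M σ) →ₗ[K] C ⊗[K] (∀ i, M i) :=
  (LinearEquiv.ofInjective (theta K C M) (theta_inj K C M)).symm.toLinearMap ∘ₗ
    LinearMap.codRestrict (LinearMap.range (theta K C M))
      (rhoHat K C M σ ∘ₗ (DD K C M σ).subtype) (fun x => x.2)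

lemma theta_rho' (x : DD K C M σ) :
    theta K C M (rho' K C M σ x) = rhoHat K C M σ x.1 :=
  inj_symm_val (theta K C M) (theta_inj K C M) _

lemma lT_proj_rho' (x : DD K C M σ) (i : I) :
    lTensor C (LinearMap.proj (R := K) (φ := M) i) (rho' K C M σ x)
      = (σ i).ρ (x.1 i) :=
  congrFun (theta_rho' K C M σ x) i

lemma rho'_mem (x : DD K C M σ) :
    rho' K C M σ x ∈ LinearMap.range (lTensor C (DD K C M σ).subtype) := by
  classical
  obtain ⟨s, hs⟩ := exists_lift (Module.Basis.ofVectorSpace K C) (DD K C M σ)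
    (rho' K C M σ x)
    (fun k => kappa_mem_DD K C M σ _ x.2 (theta_rho' K C M σ x) k)
  exact ⟨s, hs⟩

/-- The coaction on `D`. -/
noncomputable def rhoD : (DD K C M σ) →ₗ[K] C ⊗[K] (DD K C M σ) :=
  (LinearEquiv.ofInjective (lTensor C (DD K C M σ).subtype)
      (ltsub_inj C (DD K C M σ))).symm.toLinearMap ∘ₗ
    LinearMap.codRestrict (LinearMap.range (lTensor C (DD K C M σ).subtype))
      (rho' K C M σ) (rho'_mem K C M σ)

lemma lT_sub_rhoD (x : DD K C M σ) :
    lTensor C (DD K C M σ).subtype (rhoD K C M σ x) = rho' K C M σ x :=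
  inj_symm_val (lTensor C (DD K C M σ).subtype) (ltsub_inj C (DD K C M σ)) _

lemma rhoD_counit :
    (TensorProduct.lid K (DD K C M σ)).toLinearMap ∘ₗ
      rTensor (DD K C M σ) (Coalgebra.counit (R := K) (A := C)) ∘ₗ rhoD K C M σ
    = LinearMap.id := by
  apply LinearMap.ext
  intro x
  apply Subtype.ext
  show (DD K C M σ).subtype ((TensorProduct.lid K (DD K C M σ))
    (rTensor _ (Coalgebra.counit (R := K) (A := C)) (rhoD K C M σ x))) = x.1
  rw [lid_nat, swap_lr, lT_sub_rhoD]
  funext i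
  show LinearMap.proj (R := K) (φ := M) i ((TensorProduct.lid K (∀ j, M j))
    (rTensor (∀ j, M j) (Coalgebra.counit (R := K) (A := C))
      (rho' K C M σ x))) = x.1 i
  rw [lid_nat, swap_lr, lT_proj_rho']
  have := LinearMap.congr_fun (σ i).counit (x.1 i)
  simpa using this

lemma rhoD_coassoc :
    rTensor (DD K C M σ) (Coalgebra.comul (R := K) (A := C)) ∘ₗ rhoD K C M σ =
    (TensorProduct.assoc K C C (DD K C M σ)).symm.toLinearMap ∘ₗ
      lTensor C (rhoD K C M σ) ∘ₗ rhoD K C M σ := by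
  apply LinearMap.ext
  intro x
  apply ltsub_inj (C ⊗[K] C) (DD K C M σ)
  simp only [LinearMap.comp_apply, LinearEquiv.coe_coe]
  rw [swap_lr, lT_sub_rhoD, assoc_symm_nat]
  have hmap : lTensor C ((DD K C M σ).subtype) ∘ₗ rhoD K C M σ = rho' K C M σ :=
    LinearMap.ext fun y => lT_sub_rhoD K C M σ y
  rw [← LinearMap.comp_apply (lTensor C (lTensor C (DD K C M σ).subtype)),
    ← lTensor_comp, hmap]
  apply pi_lTensor_inj (C ⊗[K] C)
  intro i
  rw [swap_lr, lT_proj_rho', assoc_symm_nat, ← LinearMap.comp_apply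
    (lTensor C (lTensor C (LinearMap.proj i))), ← lTensor_comp]
  have hri : lTensor C (LinearMap.proj (R := K) (φ := M) i) ∘ₗ rho' K C M σ =
      (σ i).ρ ∘ₗ LinearMap.proj i ∘ₗ (DD K C M σ).subtype :=
    LinearMap.ext fun y => lT_proj_rho' K C M σ y i
  have hinner : lTensor C (LinearMap.proj i ∘ₗ (DD K C M σ).subtype)
      (rhoD K C M σ x) = (σ i).ρ (x.1 i) := by
    rw [lTensor_comp, LinearMap.comp_apply, lT_sub_rhoD, lT_proj_rho']
  rw [hri, lTensor_comp, LinearMap.comp_apply, hinner]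
  have := LinearMap.congr_fun (σ i).coassoc (x.1 i)
  simp only [LinearMap.comp_apply, LinearEquiv.coe_coe] at this
  exact this

/-- The comodule structure on `D`. -/
noncomputable def coactD : Coaction K C (DD K C M σ) :=
  ⟨rhoD K C M σ, rhoD_coassoc K C M σ, rhoD_counit K C M σ⟩

lemma coactD_hom (i : I) :
    IsComodHom (coactD K C M σ) (σ i)
      (LinearMap.proj i ∘ₗ (DD K C M σ).subtype) := by
  apply LinearMap.ext
  intro x
  show (σ i).ρ (x.1 i) = lTensor C (LinearMap.proj i ∘ₗ (DD K C M σ).subtype)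
    (rhoD K C M σ x)
  rw [lTensor_comp, LinearMap.comp_apply, lT_sub_rhoD, lT_proj_rho']

lemma le_DD (E : Submodule K (∀ i, M i)) (ρE : Coaction K C E)
    (hE : ∀ i, IsComodHom ρE (σ i) (LinearMap.proj i ∘ₗ E.subtype)) :
    E ≤ DD K C M σ := by
  intro x hx
  refine ⟨lTensor C E.subtype (ρE.ρ ⟨x, hx⟩), ?_⟩
  funext i
  show lTensor C (LinearMap.proj i) (lTensor C E.subtype (ρE.ρ ⟨x, hx⟩))
    = (σ i).ρ (x i)
  rw [← LinearMap.comp_apply, ← lTensor_comp]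
  exact (LinearMap.congr_fun (hE i) ⟨x, hx⟩).symm

lemma univ_DD (ρD : Coaction K C (DD K C M σ))
    (hD : ∀ i, IsComodHom ρD (σ i) (LinearMap.proj i ∘ₗ (DD K C M σ).subtype))
    (U : Type (max u v w w')) [AddCommGroup U] [Module K U]
    (ρU : Coaction K C U) (f : ∀ i, U →ₗ[K] M i)
    (hf : ∀ i, IsComodHom ρU (σ i) (f i)) :
    ∃! g : U →ₗ[K] (DD K C M σ), IsComodHom ρU ρD g ∧
      ∀ i, (LinearMap.proj i ∘ₗ (DD K C M σ).subtype) ∘ₗ g = f i := by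
  have hmem : ∀ u : U, LinearMap.pi f u ∈ DD K C M σ := by
    intro u
    refine ⟨lTensor C (LinearMap.pi f) (ρU.ρ u), ?_⟩
    funext i
    show lTensor C (LinearMap.proj i) (lTensor C (LinearMap.pi f) (ρU.ρ u))
      = (σ i).ρ (f i u)
    rw [← LinearMap.comp_apply, ← lTensor_comp, LinearMap.proj_pi]
    exact (LinearMap.congr_fun (hf i) u).symm
  refine ⟨LinearMap.codRestrict _ (LinearMap.pi f) hmem, ⟨?_, ?_⟩, ?_⟩
  · apply LinearMap.ext
    intro u
    apply ltsub_inj C (DD K C M σ)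
    show lTensor C (DD K C M σ).subtype
        (ρD.ρ (LinearMap.codRestrict _ (LinearMap.pi f) hmem u))
      = lTensor C (DD K C M σ).subtype
        (lTensor C (LinearMap.codRestrict _ (LinearMap.pi f) hmem) (ρU.ρ u))
    have hRHS : lTensor C (DD K C M σ).subtype
        (lTensor C (LinearMap.codRestrict _ (LinearMap.pi f) hmem) (ρU.ρ u))
      = lTensor C (LinearMap.pi f) (ρU.ρ u) := by
      rw [← LinearMap.comp_apply, ← lTensor_comp,
        LinearMap.subtype_comp_codRestrict]
    rw [hRHS]
    apply pi_lTensor_inj C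
    intro i
    have h1 : lTensor C (LinearMap.proj (R := K) (φ := M) i)
        (lTensor C (DD K C M σ).subtype
          (ρD.ρ (LinearMap.codRestrict _ (LinearMap.pi f) hmem u)))
        = (σ i).ρ (f i u) := by
      rw [← LinearMap.comp_apply, ← lTensor_comp]
      exact (LinearMap.congr_fun (hD i)
        (LinearMap.codRestrict _ (LinearMap.pi f) hmem u)).symm
    have h2 : lTensor C (LinearMap.proj (R := K) (φ := M) i)
        (lTensor C (LinearMap.pi f) (ρU.ρ u)) = (σ i).ρ (f i u) := by
      rw [← LinearMap.comp_apply, ← lTensor_comp, LinearMap.proj_pi]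
      exact (LinearMap.congr_fun (hf i) u).symm
    exact h1.trans h2.symm
  · intro i
    apply LinearMap.ext
    intro u
    rfl
  · intro g' hg'
    apply LinearMap.ext
    intro u
    apply Subtype.ext
    funext i
    exact LinearMap.congr_fun (hg'.2 i) u

end main

end ComodProdAux

/-- Let `K` be a field, `C` a coassociative counital `K`-coalgebra and
`(M i)` a family of left `C`-comodules, with `P = ∀ i, M i` the product of the underlying
vector spaces and projections `π i`. Then there is a unique maximal subspace `D ⊆ P`
carrying a left `C`-comodule structure such that all restrictions `π i |_D` are comodule
morphisms, and `D` with these restrictions is the product of the family in the category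
of left `C`-comodules. -/
theorem comodule_product (K : Type u) [Field K] (C : Type v) [AddCommGroup C] [Module K C]
    [Coalgebra K C] {I : Type w} (M : I → Type w')
    [∀ i, AddCommGroup (M i)] [∀ i, Module K (M i)] (σ : ∀ i, Coaction K C (M i)) :
    ∃! D : Submodule K (∀ i, M i),
      (∃ ρD : Coaction K C D,
        ∀ i, IsComodHom ρD (σ i) (LinearMap.proj i ∘ₗ D.subtype)) ∧
      (∀ E : Submodule K (∀ i, M i),
        (∃ ρE : Coaction K C E,
          ∀ i, IsComodHom ρE (σ i) (LinearMap.proj i ∘ₗ E.subtype)) → E ≤ D) ∧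
      (∀ ρD : Coaction K C D,
        (∀ i, IsComodHom ρD (σ i) (LinearMap.proj i ∘ₗ D.subtype)) →
        ∀ (U : Type (max u v w w')) [AddCommGroup U] [Module K U] (ρU : Coaction K C U)
          (f : ∀ i, U →ₗ[K] M i), (∀ i, IsComodHom ρU (σ i) (f i)) →
          ∃! g : U →ₗ[K] D, IsComodHom ρU ρD g ∧
            ∀ i, (LinearMap.proj i ∘ₗ D.subtype) ∘ₗ g = f i) := by
  classical
  refine ⟨ComodProdAux.DD K C M σ,
    ⟨⟨ComodProdAux.coactD K C M σ, ComodProdAux.coactD_hom K C M σ⟩, ?_, ?_⟩, ?_⟩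
  · rintro E ⟨ρE, hE⟩
    exact ComodProdAux.le_DD K C M σ E ρE hE
  · exact fun ρD hD U _ _ ρU f hf => ComodProdAux.univ_DD K C M σ ρD hD U ρU f hf
  · rintro D' ⟨⟨ρ', h'⟩, hmax', -⟩
    exact le_antisymm (ComodProdAux.le_DD K C M σ D' ρ' h')
      (hmax' _ ⟨ComodProdAux.coactD K C M σ, ComodProdAux.coactD_hom K C M σ⟩)
end

section
/- Let K be a field, C a coassociative counital K-coalgebra, and {M_i}_{i∈I} a family of left C-comodules with vector-space product P = ∏_{i∈I} M_i and projections π_i : P → M_i. If E ⊆ P is a K-subspace, then E admits at most one left C-comodule structure ρ_E : E → C⊗_K E such that every composite π_i|_E : E → M_i is a comodule morphism. Consequently, the collection of subspaces of P admitting such a comodule structure is directed under inclusion of vector subspaces. -/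
open TensorProduct

universe u v w w'

open TensorProduct

universe w''

set_option maxHeartbeats 1000000
set_option synthInstance.maxHeartbeats 1000000

section Aux

variable {K : Type u} [Field K] {Q : Type v} [AddCommGroup Q] [Module K Q]

/-- Basis-indexed linear equivalence `Q ⊗ W ≃ (ι →₀ W)`. -/
noncomputable def auxEqv {ι : Type*} [DecidableEq ι] (b : Module.Basis ι K Q) (W : Type w'')
    [AddCommGroup W] [Module K W] : Q ⊗[K] W ≃ₗ[K] ι →₀ W :=
  (TensorProduct.congr b.repr (LinearEquiv.refl K W)).trans
    (TensorProduct.finsuppScalarLeft K W ι)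

lemma auxEqv_nat {ι : Type*} [DecidableEq ι] (b : Module.Basis ι K Q) {W : Type w''} {W' : Type w'}
    [AddCommGroup W] [Module K W] [AddCommGroup W'] [Module K W']
    (f : W →ₗ[K] W') (t : Q ⊗[K] W) :
    auxEqv b W' (LinearMap.lTensor Q f t) = Finsupp.mapRange f (map_zero f) (auxEqv b W t) := by
  induction t using TensorProduct.induction_on with
  | zero => simp
  | tmul q w =>
      ext x
      simp [auxEqv, TensorProduct.finsuppScalarLeft_apply_tmul_apply]
  | add s t hs ht =>
      simp only [map_add, hs, ht]
      ext x; simp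

lemma joint_inj {V : Type w} [AddCommGroup V] [Module K V] {J : Type*} {N : J → Type w'}
    [∀ j, AddCommGroup (N j)] [∀ j, Module K (N j)] (g : ∀ j, V →ₗ[K] N j)
    (hg : ∀ v : V, (∀ j, g j v = 0) → v = 0)
    (t : Q ⊗[K] V) (ht : ∀ j, LinearMap.lTensor Q (g j) t = 0) : t = 0 := by
  classical
  let b := Module.Basis.ofVectorSpace K Q
  have h0 : auxEqv b V t = 0 := by
    ext x
    apply hg
    intro j
    have := auxEqv_nat b (g j) t
    rw [ht j, map_zero] at this
    have := congrFun (congrArg DFunLike.coe this.symm) x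
    simpa using this
  simpa using congrArg (auxEqv b V).symm h0

/-- Joint injectivity on a subspace of a product. -/
lemma sub_inj {I : Type w} {M : I → Type w'} [∀ i, AddCommGroup (M i)] [∀ i, Module K (M i)]
    (E : Submodule K (∀ i, M i)) (t₁ t₂ : Q ⊗[K] E)
    (h : ∀ i, LinearMap.lTensor Q ((LinearMap.proj i) ∘ₗ E.subtype) t₁ =
      LinearMap.lTensor Q ((LinearMap.proj i) ∘ₗ E.subtype) t₂) : t₁ = t₂ := by
  have := joint_inj (N := M) (fun i => (LinearMap.proj i) ∘ₗ E.subtype)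
    (fun v hv => by
      ext i
      simpa using hv i)
    (t₁ - t₂) (fun i => by rw [map_sub, h i, sub_self])
  exact sub_eq_zero.mp this

end Aux

section Main

lemma lid_nat {K : Type u} [Field K] {V : Type w} {W : Type w'} [AddCommGroup V] [Module K V]
    [AddCommGroup W] [Module K W] (f : V →ₗ[K] W) (t : K ⊗[K] V) :
    f (TensorProduct.lid K V t) = TensorProduct.lid K W (LinearMap.lTensor K f t) := by
  induction t using TensorProduct.induction_on with
  | zero => simp
  | tmul k v => simp
  | add s t hs ht => simp [map_add, hs, ht]

lemma Coaction.ext' {K : Type u} {C : Type v} {V : Type w} [CommSemiring K]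
    [AddCommMonoid C] [Module K C] [Coalgebra K C] [AddCommMonoid V] [Module K V]
    {c₁ c₂ : Coaction K C V} (h : c₁.ρ = c₂.ρ) : c₁ = c₂ := by
  cases c₁; cases c₂; cases h; rfl

end Main

/-- Let `K` be a field, `C` a coassociative counital `K`-coalgebra and
`(M i)` a family of left `C`-comodules with vector-space product `P = ∀ i, M i` and
projections `π i`. Then any subspace `E ⊆ P` admits at most one coaction `ρE` making all
composites `π i |_E` comodule morphisms; consequently, the collection of subspaces of `P`
admitting such a comodule structure is directed under inclusion. -/
theorem comodule_subspace_coaction_unique_and_directed (K : Type u) [Field K] (C : Type v)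
    [AddCommGroup C] [Module K C] [Coalgebra K C] {I : Type w} (M : I → Type w')
    [∀ i, AddCommGroup (M i)] [∀ i, Module K (M i)] (σ : ∀ i, Coaction K C (M i)) :
    (∀ (E : Submodule K (∀ i, M i)) (ρ₁ ρ₂ : Coaction K C E),
      (∀ i, IsComodHom ρ₁ (σ i) (LinearMap.proj i ∘ₗ E.subtype)) →
      (∀ i, IsComodHom ρ₂ (σ i) (LinearMap.proj i ∘ₗ E.subtype)) → ρ₁ = ρ₂) ∧
    DirectedOn (· ≤ ·)
      {E : Submodule K (∀ i, M i) |
        ∃ ρE : Coaction K C E,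
          ∀ i, IsComodHom ρE (σ i) (LinearMap.proj i ∘ₗ E.subtype)} := by
  classical
  constructor
  · intro E ρ₁ ρ₂ h₁ h₂
    apply Coaction.ext'
    ext x
    apply sub_inj
    intro i
    have e1 := LinearMap.congr_fun (h₁ i) x
    have e2 := LinearMap.congr_fun (h₂ i) x
    simp only [LinearMap.comp_apply] at e1 e2 ⊢
    rw [← e1, ← e2]
  · rintro E₁ ⟨ρa, ha1⟩ E₂ ⟨ρb, hb1⟩
    refine ⟨E₁ ⊔ E₂, ?_, le_sup_left, le_sup_right⟩
    set E := E₁ ⊔ E₂ with hEdef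
    let ι₁ : E₁ →ₗ[K] E := Submodule.inclusion le_sup_left
    let ι₂ : E₂ →ₗ[K] E := Submodule.inclusion le_sup_right
    let s : (E₁ × E₂) →ₗ[K] E := ι₁ ∘ₗ LinearMap.fst K E₁ E₂ + ι₂ ∘ₗ LinearMap.snd K E₁ E₂
    have hsur : LinearMap.range s = ⊤ := by
      rw [LinearMap.range_eq_top]
      rintro ⟨x, hx⟩
      rcases Submodule.mem_sup.mp hx with ⟨a, ha, b, hb, rfl⟩
      exact ⟨(⟨a, ha⟩, ⟨b, hb⟩), rfl⟩
    obtain ⟨g, hg⟩ := s.exists_rightInverse_of_surjective hsur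
    let φ : (E₁ × E₂) →ₗ[K] C ⊗[K] E :=
      LinearMap.lTensor C ι₁ ∘ₗ ρa.ρ ∘ₗ LinearMap.fst K E₁ E₂ +
      LinearMap.lTensor C ι₂ ∘ₗ ρb.ρ ∘ₗ LinearMap.snd K E₁ E₂
    let ρ0 : E →ₗ[K] C ⊗[K] E := φ ∘ₗ g
    have hcomp₁ : (LinearMap.proj · ∘ₗ E.subtype) = (LinearMap.proj · ∘ₗ E.subtype) := rfl
    have hP : ∀ i, (σ i).ρ ∘ₗ (LinearMap.proj i ∘ₗ E.subtype) =
        LinearMap.lTensor C (LinearMap.proj i ∘ₗ E.subtype) ∘ₗ ρ0 := by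
      intro i
      ext x
      have hx : (x : ∀ i, M i) = (((g x).1 : E₁) : ∀ i, M i) + (((g x).2 : E₂) : ∀ i, M i) := by
        have h := LinearMap.congr_fun hg x
        simp only [LinearMap.comp_apply, LinearMap.id_apply] at h
        have h2 : ((s (g x) : E) : ∀ i, M i) =
            (((g x).1 : E₁) : ∀ i, M i) + (((g x).2 : E₂) : ∀ i, M i) := rfl
        rw [h] at h2
        exact h2
      have hρ0 : ρ0 x = LinearMap.lTensor C ι₁ (ρa.ρ (g x).1) +
          LinearMap.lTensor C ι₂ (ρb.ρ (g x).2) := by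
        simp [ρ0, φ, LinearMap.add_apply, LinearMap.comp_apply]
      have hc₁ : (LinearMap.proj i ∘ₗ E.subtype) ∘ₗ ι₁ = LinearMap.proj i ∘ₗ E₁.subtype := by
        ext a; rfl
      have hc₂ : (LinearMap.proj i ∘ₗ E.subtype) ∘ₗ ι₂ = LinearMap.proj i ∘ₗ E₂.subtype := by
        ext a; rfl
      have ha := LinearMap.congr_fun (ha1 i) (g x).1
      have hb := LinearMap.congr_fun (hb1 i) (g x).2
      simp only [LinearMap.comp_apply] at ha hb ⊢
      have key₁ : LinearMap.lTensor C (LinearMap.proj i ∘ₗ E.subtype)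
          (LinearMap.lTensor C ι₁ (ρa.ρ (g x).1)) = (σ i).ρ (((g x).1 : ∀ i, M i) i) := by
        rw [← LinearMap.comp_apply, ← LinearMap.lTensor_comp, hc₁]
        exact ha.symm
      have key₂ : LinearMap.lTensor C (LinearMap.proj i ∘ₗ E.subtype)
          (LinearMap.lTensor C ι₂ (ρb.ρ (g x).2)) = (σ i).ρ (((g x).2 : ∀ i, M i) i) := by
        rw [← LinearMap.comp_apply, ← LinearMap.lTensor_comp, hc₂]
        exact hb.symm
      rw [hρ0, map_add, key₁, key₂, ← map_add]
      congr 1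
      simpa using congrFun hx i
    have hcounit : (TensorProduct.lid K E).toLinearMap ∘ₗ
        LinearMap.rTensor E (Coalgebra.counit (R := K) (A := C)) ∘ₗ ρ0 = LinearMap.id := by
      ext x i
      simp only [LinearMap.comp_apply, LinearMap.id_apply, LinearEquiv.coe_coe]
      have hfx := LinearMap.congr_fun (hP i) x
      simp only [LinearMap.comp_apply] at hfx
      have hfx' : (σ i).ρ ((x : ∀ i, M i) i) =
          (LinearMap.lTensor C (LinearMap.proj i ∘ₗ E.subtype)) (ρ0 x) := hfx
      have step1 : (LinearMap.proj i ∘ₗ E.subtype)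
            ((TensorProduct.lid K E) (LinearMap.rTensor E Coalgebra.counit (ρ0 x))) =
          (TensorProduct.lid K (M i)) (LinearMap.lTensor K (LinearMap.proj i ∘ₗ E.subtype)
            (LinearMap.rTensor E Coalgebra.counit (ρ0 x))) :=
        lid_nat _ _
      have step2 : LinearMap.lTensor K (LinearMap.proj i ∘ₗ E.subtype)
            (LinearMap.rTensor E Coalgebra.counit (ρ0 x)) =
          LinearMap.rTensor (M i) Coalgebra.counit
            (LinearMap.lTensor C (LinearMap.proj i ∘ₗ E.subtype) (ρ0 x)) :=
        LinearMap.congr_fun ((LinearMap.lTensor_comp_rTensor _ _ _).trans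
          (LinearMap.rTensor_comp_lTensor _ _ _).symm) (ρ0 x)
      have step3 := LinearMap.congr_fun (σ i).counit ((x : ∀ i, M i) i)
      simp only [LinearMap.comp_apply, LinearMap.id_apply, LinearEquiv.coe_coe] at step3
      calc ((TensorProduct.lid K E) (LinearMap.rTensor E Coalgebra.counit (ρ0 x)) : ∀ i, M i) i
          = (LinearMap.proj i ∘ₗ E.subtype)
              ((TensorProduct.lid K E) (LinearMap.rTensor E Coalgebra.counit (ρ0 x))) := rfl
        _ = (TensorProduct.lid K (M i)) (LinearMap.rTensor (M i) Coalgebra.counit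
              (LinearMap.lTensor C (LinearMap.proj i ∘ₗ E.subtype) (ρ0 x))) := by
              rw [step1, step2]
        _ = (TensorProduct.lid K (M i)) (LinearMap.rTensor (M i) Coalgebra.counit
              ((σ i).ρ ((x : ∀ i, M i) i))) := by rw [← hfx']
        _ = (x : ∀ i, M i) i := step3
    have hcoassoc : LinearMap.rTensor E (Coalgebra.comul (R := K) (A := C)) ∘ₗ ρ0 =
        (TensorProduct.assoc K C C E).symm.toLinearMap ∘ₗ LinearMap.lTensor C ρ0 ∘ₗ ρ0 := by
      ext x
      simp only [LinearMap.comp_apply, LinearEquiv.coe_coe]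
      apply sub_inj (Q := C ⊗[K] C)
      intro i
      have hfx := LinearMap.congr_fun (hP i) x
      simp only [LinearMap.comp_apply] at hfx
      have hfx' : (σ i).ρ ((x : ∀ i, M i) i) =
          (LinearMap.lTensor C (LinearMap.proj i ∘ₗ E.subtype)) (ρ0 x) := hfx
      have L : LinearMap.lTensor (C ⊗[K] C) (LinearMap.proj i ∘ₗ E.subtype)
            (LinearMap.rTensor E Coalgebra.comul (ρ0 x)) =
          LinearMap.rTensor (M i) Coalgebra.comul
            (LinearMap.lTensor C (LinearMap.proj i ∘ₗ E.subtype) (ρ0 x)) :=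
        LinearMap.congr_fun ((LinearMap.lTensor_comp_rTensor _ _ _).trans
          (LinearMap.rTensor_comp_lTensor _ _ _).symm) (ρ0 x)
      have R : LinearMap.lTensor (C ⊗[K] C) (LinearMap.proj i ∘ₗ E.subtype)
            ((TensorProduct.assoc K C C E).symm (LinearMap.lTensor C ρ0 (ρ0 x))) =
          (TensorProduct.assoc K C C (M i)).symm
            (LinearMap.lTensor C (LinearMap.lTensor C (LinearMap.proj i ∘ₗ E.subtype))
              (LinearMap.lTensor C ρ0 (ρ0 x))) := by
        have := TensorProduct.map_map_assoc_symm (LinearMap.id (R := K) (M := C))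
          (LinearMap.id (R := K) (M := C)) (LinearMap.proj i ∘ₗ E.subtype)
          (LinearMap.lTensor C ρ0 (ρ0 x))
        rw [TensorProduct.map_id] at this
        exact this
      have mid : LinearMap.lTensor C (LinearMap.lTensor C (LinearMap.proj i ∘ₗ E.subtype))
            (LinearMap.lTensor C ρ0 (ρ0 x)) =
          LinearMap.lTensor C (σ i).ρ ((σ i).ρ ((x : ∀ i, M i) i)) := by
        rw [← LinearMap.comp_apply, ← LinearMap.lTensor_comp, ← hP i,
          LinearMap.lTensor_comp, LinearMap.comp_apply, ← hfx']
      have coa := LinearMap.congr_fun (σ i).coassoc ((x : ∀ i, M i) i)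
      simp only [LinearMap.comp_apply, LinearEquiv.coe_coe] at coa
      rw [L, R, mid, ← hfx', coa]
    refine ⟨⟨ρ0, hcoassoc, hcounit⟩, fun i => ?_⟩
    exact hP i
end

section
/- Let K be a field, C a coassociative counital K-coalgebra, and {M_i}_{i∈I} a family of left C-comodules with vector-space product P = ∏_{i∈I} M_i and projections π_i. Consider the cofree comodule C⊗_K P with covering map p = ε_C⊗id_P : C⊗_K P → P, and let D' be the sum of all subcomodules E ⊆ C⊗_K P such that each composite π_i ∘ p|_E : E → M_i is a comodule morphism. Then D' is a subcomodule of C⊗_K P and (D', {π_i ∘ p|_{D'}}_{i∈I}) is the product of the family {M_i}_{i∈I} in the category of left C-comodules. -/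
open TensorProduct

universe u v w w'

namespace ComodAux

variable {K : Type*} [Field K] {C : Type*} [AddCommGroup C] [Module K C] [Coalgebra K C]

open LinearMap Coalgebra

theorem lT_inj (X : Type*) [AddCommGroup X] [Module K X]
    {V V' : Type*} [AddCommGroup V] [Module K V] [AddCommGroup V'] [Module K V']
    {f : V →ₗ[K] V'} (hf : Function.Injective f) :
    Function.Injective (LinearMap.lTensor (R := K) X f) :=
  Module.Flat.lTensor_preserves_injective_linearMap f hf

/-- naturality of the associator's inverse -/
theorem assoc_symm_nat {E' W' : Type*} [AddCommGroup E'] [Module K E']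
    [AddCommGroup W'] [Module K W'] (f : E' →ₗ[K] W') (z : C ⊗[K] (C ⊗[K] E')) :
    (LinearMap.lTensor (C ⊗[K] C) f) ((TensorProduct.assoc K C C E').symm z)
      = (TensorProduct.assoc K C C W').symm
          ((LinearMap.lTensor C (LinearMap.lTensor C f)) z) := by
  have r2' : (TensorProduct.assoc K C C W').toLinearMap ∘ₗ (LinearMap.lTensor (C ⊗[K] C) f)
      = (LinearMap.lTensor C (LinearMap.lTensor C f)) ∘ₗ
        (TensorProduct.assoc K C C E').toLinearMap := by
    apply TensorProduct.ext_threefold; intro a b e; simp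
  apply (TensorProduct.assoc K C C W').injective
  have := LinearMap.congr_fun r2' ((TensorProduct.assoc K C C E').symm z)
  simpa using this

/-- naturality of `lid` -/
theorem lT_comp_apply (X : Type*) [AddCommMonoid X] [Module K X]
    {A B D' : Type*} [AddCommMonoid A] [Module K A] [AddCommMonoid B] [Module K B]
    [AddCommMonoid D'] [Module K D'] (f : A →ₗ[K] B) (g : B →ₗ[K] D') (z : X ⊗[K] A) :
    LinearMap.lTensor X (g ∘ₗ f) z = LinearMap.lTensor X g (LinearMap.lTensor X f z) := by
  rw [lTensor_comp]; rfl

theorem lid_nat {E' W' : Type*} [AddCommGroup E'] [Module K E']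
    [AddCommGroup W'] [Module K W'] (f : E' →ₗ[K] W') :
    f ∘ₗ (TensorProduct.lid K E').toLinearMap
      = (TensorProduct.lid K W').toLinearMap ∘ₗ LinearMap.lTensor K f := by
  apply TensorProduct.ext'; intro k e; simp

variable {W : Type*} [AddCommGroup W] [Module K W]
variable (ρW : Coaction K C W) (E : Submodule K W)
  (hE : ∀ x : E, ρW.ρ ↑x ∈ LinearMap.range (LinearMap.lTensor C E.subtype))

/-- the restricted coaction map on a stable submodule -/
noncomputable def restrictρ : E →ₗ[K] C ⊗[K] E :=
  LinearMap.codRestrictOfInjective (ρW.ρ ∘ₗ E.subtype) (LinearMap.lTensor C E.subtype)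
    (lT_inj C E.injective_subtype) (fun x => hE x)

theorem restrictρ_comm (x : E) :
    LinearMap.lTensor C E.subtype (restrictρ ρW E hE x) = ρW.ρ ↑x := by
  exact LinearMap.codRestrictOfInjective_comp_apply _ _ _ _ x

/-- the restricted coaction on a stable submodule -/
noncomputable def restrict : Coaction K C E where
  ρ := restrictρ ρW E hE
  coassoc := by
    ext x
    apply lT_inj (K := K) (C ⊗[K] C) E.injective_subtype
    have nat : ∀ z : C ⊗[K] E,
        (LinearMap.lTensor (C ⊗[K] C) E.subtype) (LinearMap.rTensor E comul z)
          = LinearMap.rTensor W comul (LinearMap.lTensor C E.subtype z) := by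
      intro z
      have : (LinearMap.lTensor (C ⊗[K] C) E.subtype) ∘ₗ (LinearMap.rTensor E comul)
          = (LinearMap.rTensor W comul) ∘ₗ (LinearMap.lTensor C E.subtype) := by
        rw [lTensor_comp_rTensor, rTensor_comp_lTensor]
      exact LinearMap.congr_fun this z
    have hco := LinearMap.congr_fun ρW.coassoc (↑x : W)
    simp only [LinearMap.comp_apply, LinearEquiv.coe_coe] at hco ⊢
    rw [nat, restrictρ_comm, hco, assoc_symm_nat]
    congr 1
    have lcomp : ∀ z : C ⊗[K] E,
        (LinearMap.lTensor C (LinearMap.lTensor C E.subtype))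
            ((LinearMap.lTensor C (restrictρ ρW E hE)) z)
          = LinearMap.lTensor C ρW.ρ (LinearMap.lTensor C E.subtype z) := by
      intro z
      have h1 : (LinearMap.lTensor C (LinearMap.lTensor C E.subtype)) ∘ₗ
          (LinearMap.lTensor C (restrictρ ρW E hE))
          = LinearMap.lTensor C (ρW.ρ ∘ₗ E.subtype) := by
        rw [← lTensor_comp]
        congr 1
        ext y
        have := restrictρ_comm ρW E hE y
        simpa using this
      have h2 : LinearMap.lTensor C (ρW.ρ ∘ₗ E.subtype)
          = LinearMap.lTensor C ρW.ρ ∘ₗ LinearMap.lTensor C E.subtype := lTensor_comp C _ _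
      simpa using LinearMap.congr_fun (h1.trans h2) z
    rw [lcomp, restrictρ_comm]
  counit := by
    ext x
    have nat : ∀ z : C ⊗[K] E,
        (LinearMap.lTensor K E.subtype) (LinearMap.rTensor E counit z)
          = LinearMap.rTensor W counit (LinearMap.lTensor C E.subtype z) := by
      intro z
      have : (LinearMap.lTensor K E.subtype) ∘ₗ (LinearMap.rTensor E counit)
          = (LinearMap.rTensor W counit) ∘ₗ (LinearMap.lTensor C E.subtype) := by
        rw [lTensor_comp_rTensor, rTensor_comp_lTensor]
      exact LinearMap.congr_fun this z
    have h1 := LinearMap.congr_fun (lid_nat (K := K) E.subtype)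
        (LinearMap.rTensor E counit (restrictρ ρW E hE x))
    have h2 := LinearMap.congr_fun ρW.counit (↑x : W)
    simp only [LinearMap.comp_apply, LinearEquiv.coe_coe, LinearMap.id_apply] at h1 h2 ⊢
    show E.subtype _ = E.subtype x
    rw [h1, nat, restrictρ_comm]
    exact h2

theorem restrict_hom : IsComodHom (restrict ρW E hE) ρW E.subtype := by
  unfold IsComodHom
  ext x
  exact (restrictρ_comm ρW E hE x).symm

end ComodAux

namespace ComodAux

variable {K : Type*} [Field K] {C : Type*} [AddCommGroup C] [Module K C] [Coalgebra K C]

open LinearMap Coalgebra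

variable (P : Type*) [AddCommGroup P] [Module K P]

/-- the cofree comodule on `P` -/
noncomputable def cofree : Coaction K C (C ⊗[K] P) where
  ρ := (TensorProduct.assoc K C C P).toLinearMap ∘ₗ
    LinearMap.rTensor P (Coalgebra.comul (R := K) (A := C))
  coassoc := by
    have s1 : ∀ z : (C ⊗[K] C) ⊗[K] P,
        LinearMap.rTensor (C ⊗[K] P) (comul (R := K) (A := C))
            ((TensorProduct.assoc K C C P) z)
          = (TensorProduct.assoc K (C ⊗[K] C) C P)
              (LinearMap.rTensor P (LinearMap.rTensor C comul) z) := by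
      intro z
      have : LinearMap.rTensor (C ⊗[K] P) (comul (R := K) (A := C)) ∘ₗ
          (TensorProduct.assoc K C C P).toLinearMap
          = (TensorProduct.assoc K (C ⊗[K] C) C P).toLinearMap ∘ₗ
            LinearMap.rTensor P (LinearMap.rTensor C comul) := by
        apply TensorProduct.ext_threefold; intro a b y; simp
      simpa using LinearMap.congr_fun this z
    have s2 : ∀ z : (C ⊗[K] C) ⊗[K] P,
        LinearMap.lTensor C (LinearMap.rTensor P (comul (R := K) (A := C)))
            ((TensorProduct.assoc K C C P) z)
          = (TensorProduct.assoc K C (C ⊗[K] C) P)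
              (LinearMap.rTensor P (LinearMap.lTensor C comul) z) := by
      intro z
      have : LinearMap.lTensor C (LinearMap.rTensor P (comul (R := K) (A := C))) ∘ₗ
          (TensorProduct.assoc K C C P).toLinearMap
          = (TensorProduct.assoc K C (C ⊗[K] C) P).toLinearMap ∘ₗ
            LinearMap.rTensor P (LinearMap.lTensor C comul) := by
        apply TensorProduct.ext_threefold; intro a b y; simp
      simpa using LinearMap.congr_fun this z
    have pent : ∀ z : ((C ⊗[K] C) ⊗[K] C) ⊗[K] P,
        (TensorProduct.assoc K C C (C ⊗[K] P)).symm
            ((LinearMap.lTensor C (TensorProduct.assoc K C C P).toLinearMap)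
              ((TensorProduct.assoc K C (C ⊗[K] C) P)
                ((LinearMap.rTensor P (TensorProduct.assoc K C C C).toLinearMap) z)))
          = (TensorProduct.assoc K (C ⊗[K] C) C P) z := by
      intro z
      have : (TensorProduct.assoc K C C (C ⊗[K] P)).symm.toLinearMap ∘ₗ
          (LinearMap.lTensor C (TensorProduct.assoc K C C P).toLinearMap) ∘ₗ
          (TensorProduct.assoc K C (C ⊗[K] C) P).toLinearMap ∘ₗ
          (LinearMap.rTensor P (TensorProduct.assoc K C C C).toLinearMap)
          = (TensorProduct.assoc K (C ⊗[K] C) C P).toLinearMap := by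
        apply TensorProduct.ext_fourfold; intro a b c y; simp
      simpa using LinearMap.congr_fun this z
    apply TensorProduct.ext'; intro c x
    simp only [LinearMap.comp_apply, LinearEquiv.coe_coe, LinearMap.rTensor_tmul]
    rw [s1, LinearMap.rTensor_tmul, lTensor_comp, LinearMap.comp_apply, s2,
      LinearMap.rTensor_tmul]
    have hc : LinearMap.lTensor C (comul (R := K) (A := C)) (comul c)
        = (TensorProduct.assoc K C C C)
            (LinearMap.rTensor C (comul (R := K) (A := C)) (comul c)) :=
      (Coalgebra.coassoc_apply c).symm
    rw [hc]
    have : ((TensorProduct.assoc K C C C)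
          (LinearMap.rTensor C (comul (R := K) (A := C)) (comul c))) ⊗ₜ[K] x
        = LinearMap.rTensor P (TensorProduct.assoc K C C C).toLinearMap
            ((LinearMap.rTensor C (comul (R := K) (A := C)) (comul c)) ⊗ₜ[K] x) := by
      simp
    rw [this, pent]
  counit := by
    have s3 : ∀ z : (C ⊗[K] C) ⊗[K] P,
        (TensorProduct.lid K (C ⊗[K] P))
            (LinearMap.rTensor (C ⊗[K] P) (counit (R := K) (A := C))
              ((TensorProduct.assoc K C C P) z))
          = LinearMap.rTensor P
              ((TensorProduct.lid K C).toLinearMap ∘ₗ LinearMap.rTensor C counit) z := by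
      intro z
      have : (TensorProduct.lid K (C ⊗[K] P)).toLinearMap ∘ₗ
          LinearMap.rTensor (C ⊗[K] P) (counit (R := K) (A := C)) ∘ₗ
          (TensorProduct.assoc K C C P).toLinearMap
          = LinearMap.rTensor P
              ((TensorProduct.lid K C).toLinearMap ∘ₗ LinearMap.rTensor C counit) := by
        apply TensorProduct.ext_threefold; intro a b y
        simp [TensorProduct.smul_tmul']
      simpa using LinearMap.congr_fun this z
    apply TensorProduct.ext'; intro c x
    simp only [LinearMap.comp_apply, LinearEquiv.coe_coe, LinearMap.rTensor_tmul,
      LinearMap.id_apply]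
    rw [s3]
    simp [Coalgebra.rTensor_counit_comul]

/-- the covering map is a retraction of the coaction after tensoring -/
theorem cofree_sec :
    LinearMap.lTensor C ((TensorProduct.lid K P).toLinearMap ∘ₗ
        LinearMap.rTensor P (Coalgebra.counit (R := K) (A := C))) ∘ₗ
      (cofree (K := K) (C := C) P).ρ = LinearMap.id := by
  have s4 : ∀ z : (C ⊗[K] C) ⊗[K] P,
      LinearMap.lTensor C ((TensorProduct.lid K P).toLinearMap ∘ₗ
          LinearMap.rTensor P (Coalgebra.counit (R := K) (A := C)))
          ((TensorProduct.assoc K C C P) z)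
        = LinearMap.rTensor P
            ((TensorProduct.rid K C).toLinearMap ∘ₗ LinearMap.lTensor C counit) z := by
    intro z
    have : LinearMap.lTensor C ((TensorProduct.lid K P).toLinearMap ∘ₗ
        LinearMap.rTensor P (Coalgebra.counit (R := K) (A := C))) ∘ₗ
        (TensorProduct.assoc K C C P).toLinearMap
        = LinearMap.rTensor P
            ((TensorProduct.rid K C).toLinearMap ∘ₗ LinearMap.lTensor C counit) := by
      apply TensorProduct.ext_threefold; intro a b y
      simp [TensorProduct.smul_tmul']
    simpa using LinearMap.congr_fun this z
  apply TensorProduct.ext'; intro c x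
  simp only [cofree, LinearMap.comp_apply, LinearEquiv.coe_coe, LinearMap.rTensor_tmul,
    LinearMap.id_apply]
  rw [s4]
  simp [Coalgebra.lTensor_counit_comul]

variable {P} {U : Type*} [AddCommGroup U] [Module K U]

/-- the canonical lift into the cofree comodule is a comodule morphism -/
theorem cofree_hom (ρU : Coaction K C U) (F : U →ₗ[K] P) :
    IsComodHom ρU (cofree (K := K) (C := C) P) (LinearMap.lTensor C F ∘ₗ ρU.ρ) := by
  unfold IsComodHom
  have s5 : ∀ z : (C ⊗[K] C) ⊗[K] U,
      (TensorProduct.assoc K C C P) (LinearMap.lTensor (C ⊗[K] C) F z)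
        = LinearMap.lTensor C (LinearMap.lTensor C F) ((TensorProduct.assoc K C C U) z) := by
    intro z
    have : (TensorProduct.assoc K C C P).toLinearMap ∘ₗ LinearMap.lTensor (C ⊗[K] C) F
        = LinearMap.lTensor C (LinearMap.lTensor C F) ∘ₗ
          (TensorProduct.assoc K C C U).toLinearMap := by
      apply TensorProduct.ext_threefold; intro a b y; simp
    simpa using LinearMap.congr_fun this z
  have nat : ∀ z : C ⊗[K] U,
      LinearMap.rTensor P (comul (R := K) (A := C)) (LinearMap.lTensor C F z)
        = LinearMap.lTensor (C ⊗[K] C) F (LinearMap.rTensor U comul z) := by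
    intro z
    have : LinearMap.rTensor P (comul (R := K) (A := C)) ∘ₗ LinearMap.lTensor C F
        = LinearMap.lTensor (C ⊗[K] C) F ∘ₗ LinearMap.rTensor U comul := by
      rw [lTensor_comp_rTensor, rTensor_comp_lTensor]
    exact LinearMap.congr_fun this z
  ext u
  have hco := LinearMap.congr_fun ρU.coassoc u
  simp only [cofree, LinearMap.comp_apply, LinearEquiv.coe_coe] at hco ⊢
  rw [nat, s5]
  have : (TensorProduct.assoc K C C U) (LinearMap.rTensor U (comul (R := K) (A := C)) (ρU.ρ u))
      = LinearMap.lTensor C ρU.ρ (ρU.ρ u) := by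
    rw [hco]; simp
  rw [this]
  have : LinearMap.lTensor C (LinearMap.lTensor C F) (LinearMap.lTensor C ρU.ρ (ρU.ρ u))
      = LinearMap.lTensor C (LinearMap.lTensor C F ∘ₗ ρU.ρ) (ρU.ρ u) := by
    rw [lTensor_comp]; rfl
  rw [this]

/-- the covering map recovers `F` -/
theorem cofree_p_comp (ρU : Coaction K C U) (F : U →ₗ[K] P) :
    ((TensorProduct.lid K P).toLinearMap ∘ₗ
        LinearMap.rTensor P (Coalgebra.counit (R := K) (A := C))) ∘ₗ
      (LinearMap.lTensor C F ∘ₗ ρU.ρ) = F := by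
  have nat : ∀ z : C ⊗[K] U,
      LinearMap.rTensor P (counit (R := K) (A := C)) (LinearMap.lTensor C F z)
        = LinearMap.lTensor K F (LinearMap.rTensor U counit z) := by
    intro z
    have : LinearMap.rTensor P (counit (R := K) (A := C)) ∘ₗ LinearMap.lTensor C F
        = LinearMap.lTensor K F ∘ₗ LinearMap.rTensor U counit := by
      rw [lTensor_comp_rTensor, rTensor_comp_lTensor]
    exact LinearMap.congr_fun this z
  ext u
  have hcu := LinearMap.congr_fun ρU.counit u
  have hlid := LinearMap.congr_fun (lid_nat (K := K) F)
      (LinearMap.rTensor U (counit (R := K) (A := C)) (ρU.ρ u))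
  simp only [LinearMap.comp_apply, LinearEquiv.coe_coe, LinearMap.id_apply] at hcu hlid ⊢
  rw [nat, ← hlid, hcu]

end ComodAux

/-- Let `K` be a field, `C` a coassociative counital `K`-coalgebra and
`(M i)` a family of left `C`-comodules with vector-space product `P = ∀ i, M i` and
projections `π i`. Consider the cofree comodule `C ⊗ P` (coaction `Δ_C ⊗ id_P`) with
covering map `p = ε_C ⊗ id_P : C ⊗ P → P`, and let `D'` be the sum of all subcomodules
`E ⊆ C ⊗ P` such that each composite `π i ∘ p |_E` is a comodule morphism. Then `D'` is a
subcomodule of `C ⊗ P` and `(D', (π i ∘ p)|_{D'})` is the product of the family in the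
category of left `C`-comodules. -/
theorem comodule_product_via_cofree (K : Type u) [Field K] (C : Type v) [AddCommGroup C]
    [Module K C] [Coalgebra K C] {I : Type w} (M : I → Type w')
    [∀ i, AddCommGroup (M i)] [∀ i, Module K (M i)] (σ : ∀ i, Coaction K C (M i)) :
    -- `p` is the covering map of the cofree comodule over `P = ∀ i, M i`
    let p : (C ⊗[K] (∀ i, M i)) →ₗ[K] (∀ i, M i) :=
      (TensorProduct.lid K (∀ i, M i)).toLinearMap ∘ₗ
        LinearMap.rTensor (∀ i, M i) (Coalgebra.counit (R := K) (A := C))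
    ∃ ρW : Coaction K C (C ⊗[K] (∀ i, M i)),
      ρW.ρ = (TensorProduct.assoc K C C (∀ i, M i)).toLinearMap ∘ₗ
        LinearMap.rTensor (∀ i, M i) (Coalgebra.comul (R := K) (A := C)) ∧
      -- `Good E` says `E` is a subcomodule of `C ⊗ P` on which all `π i ∘ p` are
      -- comodule morphisms; `D'` is the sum of all such subcomodules
      ∀ Good : Submodule K (C ⊗[K] (∀ i, M i)) → Prop,
        (Good = fun E : Submodule K (C ⊗[K] (∀ i, M i)) =>
          ∃ ρE : Coaction K C ↥E, IsComodHom ρE ρW E.subtype ∧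
            ∀ i, IsComodHom ρE (σ i) ((LinearMap.proj i ∘ₗ p) ∘ₗ E.subtype)) →
        ∃ ρD : Coaction K C ↥(sSup {E | Good E}),
          IsComodHom ρD ρW (sSup {E | Good E}).subtype ∧
          (∀ i, IsComodHom ρD (σ i)
            ((LinearMap.proj i ∘ₗ p) ∘ₗ (sSup {E | Good E}).subtype)) ∧
          ∀ (U : Type (max u v w w')) [AddCommGroup U] [Module K U]
            (ρU : Coaction K C U) (f : ∀ i, U →ₗ[K] M i),
            (∀ i, IsComodHom ρU (σ i) (f i)) →
            ∃! g : U →ₗ[K] ↥(sSup {E | Good E}), IsComodHom ρU ρD g ∧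
              ∀ i, ((LinearMap.proj i ∘ₗ p) ∘ₗ (sSup {E | Good E}).subtype) ∘ₗ g = f i := by
  intro p
  classical
  refine ⟨ComodAux.cofree _, rfl, ?_⟩
  intro Good hGood
  subst hGood
  set ρW := ComodAux.cofree (K := K) (C := C) (∀ i, M i) with hρW
  set D := sSup {E : Submodule K (C ⊗[K] (∀ i, M i)) |
      ∃ ρE : Coaction K C ↥E, IsComodHom ρE ρW E.subtype ∧
        ∀ i, IsComodHom ρE (σ i) ((LinearMap.proj i ∘ₗ p) ∘ₗ E.subtype)} with hD
  have hp : p = (TensorProduct.lid K (∀ i, M i)).toLinearMap ∘ₗ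
      LinearMap.rTensor (∀ i, M i) (Coalgebra.counit (R := K) (A := C)) := rfl
  -- the key pointwise facts on `D`
  have key : ∀ x ∈ D, ρW.ρ x ∈ LinearMap.range (LinearMap.lTensor C D.subtype) ∧
      ∀ i, (σ i).ρ ((LinearMap.proj i ∘ₗ p) x)
        = LinearMap.lTensor C (LinearMap.proj i ∘ₗ p) (ρW.ρ x) := by
    intro x hx
    rw [hD, sSup_eq_iSup'] at hx
    refine Submodule.iSup_induction _ (motive := fun y =>
      ρW.ρ y ∈ LinearMap.range (LinearMap.lTensor C D.subtype) ∧
      ∀ i, (σ i).ρ ((LinearMap.proj i ∘ₗ p) y)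
        = LinearMap.lTensor C (LinearMap.proj i ∘ₗ p) (ρW.ρ y)) hx ?_ ?_ ?_
    · rintro ⟨E, hEmem⟩ y hy
      have hle : E ≤ D := hD ▸ le_sSup hEmem
      obtain ⟨ρE, hE1, hE2⟩ := hEmem
      have hy' : ρW.ρ y = LinearMap.lTensor C E.subtype (ρE.ρ ⟨y, hy⟩) := by
        have := LinearMap.congr_fun hE1 ⟨y, hy⟩
        simpa using this
      constructor
      · rw [hy']
        have hcomp : LinearMap.lTensor C E.subtype
            = LinearMap.lTensor C D.subtype ∘ₗ
              LinearMap.lTensor C (Submodule.inclusion hle) := by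
          rw [← LinearMap.lTensor_comp, Submodule.subtype_comp_inclusion]
        rw [hcomp]
        exact ⟨_, rfl⟩
      · intro i
        have h2 := LinearMap.congr_fun (hE2 i) ⟨y, hy⟩
        simp only [LinearMap.comp_apply, Submodule.coe_subtype] at h2 ⊢
        rw [hy']
        rw [← ComodAux.lT_comp_apply C E.subtype (LinearMap.proj i ∘ₗ p) (ρE.ρ ⟨y, hy⟩), ← h2]
    · exact ⟨by simp, fun i => by simp⟩
    · rintro y z ⟨hy1, hy2⟩ ⟨hz1, hz2⟩
      refine ⟨?_, fun i => ?_⟩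
      · rw [map_add]; exact add_mem hy1 hz1
      · simp only [map_add, hy2 i, hz2 i]
  have hstab : ∀ x : D, ρW.ρ ↑x ∈ LinearMap.range (LinearMap.lTensor C D.subtype) :=
    fun x => (key ↑x x.2).1
  refine ⟨ComodAux.restrict ρW D hstab, ComodAux.restrict_hom ρW D hstab, ?_, ?_⟩
  · -- the projections are comodule morphisms on `D`
    intro i
    unfold IsComodHom
    ext x
    simp only [LinearMap.comp_apply, Submodule.coe_subtype]
    have h1 := (key ↑x x.2).2 i
    simp only [LinearMap.comp_apply] at h1
    rw [h1, ← ComodAux.restrictρ_comm ρW D hstab x]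
    rw [← ComodAux.lT_comp_apply C D.subtype (LinearMap.proj i ∘ₗ p)
      ((ComodAux.restrictρ ρW D hstab) x)]
    rfl
  · -- universal property
    intro U _ _ ρU f hf
    set F := LinearMap.pi f with hF
    set g0 := LinearMap.lTensor C F ∘ₗ ρU.ρ with hg0
    have hg0hom : ρW.ρ ∘ₗ g0 = LinearMap.lTensor C g0 ∘ₗ ρU.ρ := ComodAux.cofree_hom ρU F
    have hpg0 : p ∘ₗ g0 = F := ComodAux.cofree_p_comp ρU F
    have hsec : LinearMap.lTensor C p ∘ₗ ρW.ρ = LinearMap.id := by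
      rw [hp, hρW]; exact ComodAux.cofree_sec (∀ i, M i)
    set E₀ := LinearMap.range g0 with hE₀
    set g' := g0.rangeRestrict with hg'
    have hg'ι : E₀.subtype ∘ₗ g' = g0 := by ext u; rfl
    have hstab0 : ∀ x : E₀, ρW.ρ ↑x ∈ LinearMap.range (LinearMap.lTensor C E₀.subtype) := by
      rintro ⟨y, hy⟩
      obtain ⟨u, rfl⟩ := hy
      have h1 := LinearMap.congr_fun hg0hom u
      simp only [LinearMap.comp_apply] at h1 ⊢
      rw [h1, ← hg'ι, ComodAux.lT_comp_apply C g' E₀.subtype (ρU.ρ u)]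
      exact ⟨_, rfl⟩
    set ρ₀ := ComodAux.restrict ρW E₀ hstab0 with hρ₀
    have hg'hom : ρ₀.ρ ∘ₗ g' = LinearMap.lTensor C g' ∘ₗ ρU.ρ := by
      ext u
      apply ComodAux.lT_inj (K := K) C E₀.injective_subtype
      have h1 := LinearMap.congr_fun hg0hom u
      simp only [LinearMap.comp_apply] at h1 ⊢
      have h2 : LinearMap.lTensor C E₀.subtype (ρ₀.ρ (g' u)) = ρW.ρ (g0 u) :=
        ComodAux.restrictρ_comm ρW E₀ hstab0 (g' u)
      rw [h2, h1, ← ComodAux.lT_comp_apply C g' E₀.subtype (ρU.ρ u), hg'ι]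
    have hE₀Good : E₀ ∈ {E : Submodule K (C ⊗[K] (∀ i, M i)) |
        ∃ ρE : Coaction K C ↥E, IsComodHom ρE ρW E.subtype ∧
          ∀ i, IsComodHom ρE (σ i) ((LinearMap.proj i ∘ₗ p) ∘ₗ E.subtype)} := by
      refine ⟨ρ₀, ComodAux.restrict_hom ρW E₀ hstab0, fun i => ?_⟩
      unfold IsComodHom
      have hfi : (LinearMap.proj i ∘ₗ p) ∘ₗ g0 = f i := by
        rw [LinearMap.comp_assoc, hpg0, hF, LinearMap.proj_pi]
      have hcomp : ((LinearMap.proj i ∘ₗ p) ∘ₗ E₀.subtype) ∘ₗ g' = f i := by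
        rw [LinearMap.comp_assoc, hg'ι]
        exact hfi
      ext x
      obtain ⟨u, rfl⟩ := LinearMap.surjective_rangeRestrict g0 x
      have h4 := LinearMap.congr_fun (hf i) u
      have h5 := LinearMap.congr_fun hg'hom u
      have h7 := LinearMap.congr_fun hcomp u
      simp only [LinearMap.comp_apply, Submodule.coe_subtype] at h4 h5 h7 ⊢
      rw [h7, h5, ← ComodAux.lT_comp_apply C g'
          ((LinearMap.proj (R := K) (φ := M) i ∘ₗ p) ∘ₗ E₀.subtype) (ρU.ρ u), hcomp]
      exact h4
    have hle : E₀ ≤ D := hD ▸ le_sSup hE₀Good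
    set g : U →ₗ[K] ↥D := Submodule.inclusion hle ∘ₗ g' with hg
    have hιg : D.subtype ∘ₗ g = g0 := by ext u; rfl
    refine ⟨g, ⟨?_, ?_⟩, ?_⟩
    · -- g is a comodule morphism
      unfold IsComodHom
      ext u
      apply ComodAux.lT_inj (K := K) C D.injective_subtype
      have h1 := LinearMap.congr_fun hg0hom u
      simp only [LinearMap.comp_apply] at h1 ⊢
      have h2 : LinearMap.lTensor C D.subtype
          ((ComodAux.restrict ρW D hstab).ρ (g u)) = ρW.ρ (g0 u) :=
        ComodAux.restrictρ_comm ρW D hstab (g u)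
      rw [h2, h1, ← ComodAux.lT_comp_apply C g D.subtype (ρU.ρ u), hιg]
    · intro i
      rw [LinearMap.comp_assoc, hιg, LinearMap.comp_assoc, hpg0, hF, LinearMap.proj_pi]
    · -- uniqueness
      intro g₂ ⟨hom₂, hproj₂⟩
      have hcoe : ∀ u, (↑(g₂ u) : C ⊗[K] (∀ i, M i)) = g0 u := by
        intro u
        have hhom2 : ρW.ρ (↑(g₂ u) : C ⊗[K] (∀ i, M i))
            = LinearMap.lTensor C (D.subtype ∘ₗ g₂) (ρU.ρ u) := by
          have h1 := LinearMap.congr_fun hom₂ u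
          simp only [LinearMap.comp_apply] at h1
          have h2 : LinearMap.lTensor C D.subtype
              ((ComodAux.restrict ρW D hstab).ρ (g₂ u)) = ρW.ρ ↑(g₂ u) :=
            ComodAux.restrictρ_comm ρW D hstab (g₂ u)
          rw [← h2, h1, ← ComodAux.lT_comp_apply C g₂ D.subtype (ρU.ρ u)]
        have hph2 : p ∘ₗ (D.subtype ∘ₗ g₂) = F := by
          ext u' j
          have h9 := LinearMap.congr_fun (hproj₂ j) u'
          simp only [LinearMap.comp_apply, LinearMap.proj_apply,
            Submodule.coe_subtype] at h9 ⊢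
          simp only [hF, LinearMap.pi_apply]
          exact h9
        have hs := LinearMap.congr_fun hsec (↑(g₂ u) : C ⊗[K] (∀ i, M i))
        simp only [LinearMap.comp_apply, LinearMap.id_apply] at hs
        calc (↑(g₂ u) : C ⊗[K] (∀ i, M i))
            = LinearMap.lTensor C p (ρW.ρ (↑(g₂ u) : C ⊗[K] (∀ i, M i))) := hs.symm
          _ = LinearMap.lTensor C p
              (LinearMap.lTensor C (D.subtype ∘ₗ g₂) (ρU.ρ u)) := by rw [hhom2]
          _ = LinearMap.lTensor C (p ∘ₗ (D.subtype ∘ₗ g₂)) (ρU.ρ u) :=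
              (ComodAux.lT_comp_apply C (D.subtype ∘ₗ g₂) p (ρU.ρ u)).symm
          _ = LinearMap.lTensor C F (ρU.ρ u) := by rw [hph2]
          _ = g0 u := rfl
      ext u
      have h10 := LinearMap.congr_fun hιg u
      simp only [LinearMap.comp_apply, Submodule.coe_subtype] at h10
      rw [hcoe u]
      exact h10.symm
end
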